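/- Let V: ℝ → [0,∞) satisfy V(x) ≥ (|x - x_j|/k)^p on each ball B(x_j, kγ^{1/p}) (j = 1,…,n), and suppose {x : V(x) < γ} is contained in the union of these balls. Then ∫_ℝ [γ - V(x)]₊² dx ≤ n k ω₁ γ^{2 + 1/p}, where [·]₊ denotes the positive part and ω₁ is a dimensional constant. -/

import Mathlib

open MeasureTheory Filter

/-- If `V ≥ (|x-xⱼ|/k)^p` on each ball `B(xⱼ, kγ^{1/p})` and `{V < γ}` is contained in the
union of these balls, then `∫ [γ - V]₊² ≤ n k ω₁ γ^{2+1/p}`, where `ω₁` is the volume of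
the unit ball in `ℝ`. -/
theorem stmt6 (V : ℝ → ℝ) (hVmeas : Measurable V) (hV0 : ∀ x, 0 ≤ V x)
    (n : ℕ) (xj : Fin n → ℝ) (p k γ ω1 : ℝ)
    (hp : 0 < p) (hk : 0 < k) (hγ : 0 < γ)
    (hω1 : ω1 = (volume (Metric.ball (0 : ℝ) 1)).toReal)
    (hlow : ∀ j : Fin n, ∀ x ∈ Metric.ball (xj j) (k * γ ^ (1 / p)),
      (|x - xj j| / k) ^ p ≤ V x)
    (hsub : {x : ℝ | V x < γ} ⊆ ⋃ j : Fin n, Metric.ball (xj j) (k * γ ^ (1 / p))) :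
    (∫ x : ℝ, (max (γ - V x) 0) ^ 2) ≤ (n : ℝ) * k * ω1 * γ ^ (2 + 1 / p) := by
  have hr : (0:ℝ) < k * γ ^ (1 / p) := mul_pos hk (Real.rpow_pos_of_pos hγ _)
  set r : ℝ := k * γ ^ (1 / p) with hrdef
  set S : Set ℝ := ⋃ j : Fin n, Metric.ball (xj j) r with hS
  have hSmeas : MeasurableSet S := MeasurableSet.iUnion fun j => measurableSet_ball
  have hSvol : volume S ≤ (n : ENNReal) * ENNReal.ofReal (2 * r) := by
    calc volume S ≤ ∑ j : Fin n, volume (Metric.ball (xj j) r) :=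
          measure_iUnion_fintype_le _ _
      _ = (n : ENNReal) * ENNReal.ofReal (2 * r) := by
          simp [Real.volume_ball, Finset.sum_const, mul_comm]
  have hSfin : volume S < ⊤ :=
    lt_of_le_of_lt hSvol (by finiteness)
  set g : ℝ → ℝ := S.indicator (fun _ => γ ^ 2) with hg
  have hfg : ∀ x, (max (γ - V x) 0) ^ 2 ≤ g x := by
    intro x
    by_cases hx : x ∈ S
    · have h1 : max (γ - V x) 0 ≤ γ := by
        apply max_le _ hγ.le
        linarith [hV0 x]
      have h0 : (0:ℝ) ≤ max (γ - V x) 0 := le_max_right _ _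
      simpa [hg, Set.indicator_of_mem hx] using pow_le_pow_left₀ h0 h1 2
    · have hxV : ¬ V x < γ := fun h => hx (hsub h)
      have : γ - V x ≤ 0 := by linarith [not_lt.mp hxV]
      simp [hg, Set.indicator_of_notMem hx, max_eq_right this]
  have hgint : Integrable g := by
    rw [hg, integrable_indicator_iff hSmeas]
    exact integrableOn_const hSfin.ne
  have hfint : Integrable (fun x => (max (γ - V x) 0) ^ 2) := by
    apply hgint.mono' ((((measurable_const.sub hVmeas).max measurable_const).pow
      measurable_const).aestronglyMeasurable)
    filter_upwards with x
    have h0 : (0:ℝ) ≤ max (γ - V x) 0 := le_max_right _ _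
    rw [Real.norm_eq_abs]; change |max (γ - V x) 0 ^ 2| ≤ g x; rw [abs_of_nonneg (pow_nonneg h0 2)]
    exact hfg x
  have hle : (∫ x : ℝ, (max (γ - V x) 0) ^ 2) ≤ ∫ x, g x :=
    integral_mono hfint hgint hfg
  have hgval : (∫ x, g x) = (volume S).toReal * γ ^ 2 := by
    rw [hg, integral_indicator_const _ hSmeas]; simp [smul_eq_mul, measureReal_def]
  have hω1' : ω1 = 2 := by
    rw [hω1, Real.volume_ball]
    norm_num
  have hvolS : (volume S).toReal ≤ (n : ℝ) * (2 * r) := by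
    have := ENNReal.toReal_mono (by finiteness) hSvol
    rwa [ENNReal.toReal_mul, ENNReal.toReal_natCast,
      ENNReal.toReal_ofReal (by positivity)] at this
  have hpow : γ ^ (2 + 1 / p) = γ ^ 2 * γ ^ (1 / p) := by
    rw [Real.rpow_add hγ, Real.rpow_two]
  calc (∫ x : ℝ, (max (γ - V x) 0) ^ 2) ≤ (volume S).toReal * γ ^ 2 := hle.trans_eq hgval
    _ ≤ ((n : ℝ) * (2 * r)) * γ ^ 2 := by
        apply mul_le_mul_of_nonneg_right hvolS (by positivity)
    _ = (n : ℝ) * k * ω1 * γ ^ (2 + 1 / p) := by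
        rw [hpow, hω1', hrdef]; ring
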